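/- Let R be a finite Frobenius ring (i.e., a finite ring admitting a generating character) and let U be a subgroup of the multiplicative group of units R^×. Then the group Mon_U(n,R) of monomial n×n matrices over R whose nonzero entries lie in U satisfies the local-global property: every local Mon_U(n,R)-map f : C → R^n defined on a code C ⊆ R^n is a global Mon_U(n,R)-map. -/

import Mathlib

open Matrix

noncomputable section

/-- `χ` is a generating character of the finite ring `R`. -/
def IsGeneratingChar {R : Type*} [Ring R] [Fintype R] (χ : AddChar R ℂ) : Prop :=
  ∀ ψ : AddChar R ℂ, ∃! r : R, ∀ x : R, ψ x = χ (x * r)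

/-- A finite ring is Frobenius iff it admits a generating character. -/
def IsFrobeniusRing (R : Type*) [Ring R] [Fintype R] : Prop :=
  ∃ χ : AddChar R ℂ, IsGeneratingChar χ

/-- `M ∈ Mon_U(n,R)`: `M` is a monomial matrix (exactly one nonzero entry in each row
and column, all of them units) whose nonzero entries lie in the subgroup `U ≤ R^×`. -/
def IsMonomialU {R : Type*} [Ring R] {n : ℕ} (U : Subgroup Rˣ)
    (M : Matrix (Fin n) (Fin n) R) : Prop :=
  ∃ (σ : Equiv.Perm (Fin n)) (d : Fin n → Rˣ), (∀ i, d i ∈ U) ∧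
    ∀ i j, M i j = if j = σ i then (d i : R) else 0

set_option linter.unusedSectionVars false

namespace MonAux
variable {R : Type*} [Ring R] [Fintype R]

/-- Right multiplication by `a` as a left-linear map. -/
def mulRightLin (a : R) : R →ₗ[R] R where
  toFun x := x * a
  map_add' x y := add_mul x y a
  map_smul' r x := by simp [mul_assoc]

lemma eq_zero_of_char (χ : AddChar R ℂ) (hχ : IsGeneratingChar χ) {a : R}
    (h : ∀ x : R, χ (x * a) = 1) : a = 0 := by
  obtain ⟨r, _, hu⟩ := hχ 1
  have h1 : a = r := hu a (fun x => by simp [h x])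
  have h2 : (0 : R) = r := hu 0 (fun x => by simp)
  rw [h1, ← h2]

lemma char_ne_zero (χ : AddChar R ℂ) (a : R) : χ a ≠ 0 :=
  left_ne_zero_of_mul_eq_one (b := χ (-a)) (by rw [← AddChar.map_add_eq_mul]; simp)

lemma linearMap_eq_of_char {M : Type*} [AddCommGroup M] [Module R M]
    (χ : AddChar R ℂ) (hχ : IsGeneratingChar χ) (g h : M →ₗ[R] R)
    (he : ∀ x, χ (g x) = χ (h x)) : g = h := by
  have key : ∀ x, χ ((g - h) x) = 1 := by
    intro x
    rw [LinearMap.sub_apply, AddChar.map_sub_eq_div, he x, div_self (char_ne_zero χ _)]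
  have hz : ∀ x, (g - h) x = 0 := by
    intro x
    apply eq_zero_of_char χ hχ
    intro r
    have := key (r • x)
    rwa [LinearMap.map_smul, smul_eq_mul] at this
  ext x
  have := hz x
  rw [LinearMap.sub_apply, sub_eq_zero] at this
  simpa using this

lemma vecMul_monomial {n : ℕ} (M : Matrix (Fin n) (Fin n) R) (σ : Equiv.Perm (Fin n))
    (c : Fin n → R) (hM : ∀ i j, M i j = if j = σ i then c i else 0) (x : Fin n → R) (j : Fin n) :
    (x ᵥ* M) j = x (σ.symm j) * c (σ.symm j) := by
  classical
  have h1 : (x ᵥ* M) j = ∑ i, x i * M i j := by simp [Matrix.vecMul, dotProduct]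
  rw [h1, Finset.sum_eq_single (σ.symm j)]
  · rw [hM]; simp
  · intro i _ hi
    rw [hM]
    have hne : ¬ j = σ i := fun hji => hi (by rw [hji, Equiv.symm_apply_apply])
    simp [hne]
  · intro hmem; exact absurd (Finset.mem_univ _) hmem

end MonAux

open MonAux in
set_option maxHeartbeats 1000000 in
/-- **Local-global property of `Mon_U(n,R)`.**  Over a finite Frobenius ring `R` and a
subgroup `U ≤ R^×`, every local `Mon_U(n,R)`-map `f : C → R^n` on a code `C ⊆ R^n` is a
global `Mon_U(n,R)`-map. -/
theorem monomialU_local_global {R : Type*} [Ring R] [Fintype R]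
    (hR : IsFrobeniusRing R) (U : Subgroup Rˣ) {n : ℕ}
    (C : Submodule R (Fin n → R)) (f : C →ₗ[R] (Fin n → R))
    (hf : ∀ x : C, ∃ M : Matrix (Fin n) (Fin n) R,
      IsMonomialU U M ∧ f x = (x : Fin n → R) ᵥ* M) :
    ∃ M : Matrix (Fin n) (Fin n) R,
      IsMonomialU U M ∧ ∀ x : C, f x = (x : Fin n → R) ᵥ* M := by
  obtain ⟨χ, hχ⟩ := hR
  classical
  -- the functionals
  let lam : Fin n → (C →ₗ[R] R) := fun i => (LinearMap.proj i).comp C.subtype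
  let mu : Fin n → (C →ₗ[R] R) := fun j => (LinearMap.proj j).comp f
  -- the right U-action
  let sc : (C →ₗ[R] R) → U → (C →ₗ[R] R) := fun g u => (mulRightLin ((u : Rˣ) : R)).comp g
  have sc_apply : ∀ g u x, sc g u x = g x * ((u : Rˣ) : R) := fun _ _ _ => rfl
  have sc_one : ∀ g, sc g 1 = g := by
    intro g; ext x; simp [sc_apply]
  have sc_mul : ∀ g u v, sc (sc g u) v = sc g (u * v) := by
    intro g u v; ext x; simp [sc_apply, mul_assoc]
  -- the associated additive characters of C
  let ψ : (C →ₗ[R] R) → AddChar C ℂ := fun g =>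
    { toFun := fun x => χ (g x)
      map_zero_eq_one' := by simp
      map_add_eq_mul' := fun a b => by
        show χ (g (a + b)) = χ (g a) * χ (g b)
        rw [map_add, AddChar.map_add_eq_mul] }
  have ψ_apply : ∀ g x, ψ g x = χ (g x) := fun _ _ => rfl
  have ψ_inj : Function.Injective ψ := by
    intro g h hgh
    exact linearMap_eq_of_char χ hχ g h fun x => by
      rw [← ψ_apply, ← ψ_apply, hgh]
  have li : LinearIndependent ℂ (fun g : (C →ₗ[R] R) => ((ψ g : C → ℂ))) :=
    (AddChar.linearIndependent C ℂ).comp ψ ψ_inj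
  -- the key character-sum identity coming from locality
  have key : ∑ p : Fin n × U, ((ψ (sc (lam p.1) p.2)) : C → ℂ)
      = ∑ p : Fin n × U, ((ψ (sc (mu p.1) p.2)) : C → ℂ) := by
    funext x
    obtain ⟨M, ⟨σ, d, hdU, hM⟩, hfx⟩ := hf x
    have hfj : ∀ j, f x j = (x : Fin n → R) (σ.symm j) * (d (σ.symm j) : R) := by
      intro j; rw [hfx]; exact vecMul_monomial M σ _ hM _ j
    simp only [Finset.sum_apply, Fintype.sum_prod_type]
    have hmu : ∀ j (u : U), ψ (sc (mu j) u) x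
        = χ ((x : Fin n → R) (σ.symm j) * ((d (σ.symm j) : R) * ((u : Rˣ) : R))) := by
      intro j u
      rw [ψ_apply, sc_apply]
      have : mu j x = f x j := rfl
      rw [this, hfj, mul_assoc]
    calc ∑ i, ∑ u : U, ψ (sc (lam i) u) x
        = ∑ i, ∑ u : U, χ ((x : Fin n → R) i * ((u : Rˣ) : R)) := rfl
      _ = ∑ i, ∑ u : U, χ ((x : Fin n → R) i * ((d i : R) * ((u : Rˣ) : R))) := by
          refine Finset.sum_congr rfl fun i _ => ?_
          refine (Equiv.sum_comp (Equiv.mulLeft (⟨d i, hdU i⟩ : U))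
            (fun u : U => χ ((x : Fin n → R) i * ((u : Rˣ) : R)))).symm.trans ?_
          refine Finset.sum_congr rfl fun u _ => ?_
          congr 1
      _ = ∑ j, ∑ u : U, χ ((x : Fin n → R) (σ.symm j) * ((d (σ.symm j) : R) * ((u : Rˣ) : R))) :=
          (Equiv.sum_comp σ.symm
            (fun i => ∑ u : U, χ ((x : Fin n → R) i * ((d i : R) * ((u : Rˣ) : R))))).symm
      _ = ∑ j, ∑ u : U, ψ (sc (mu j) u) x := by
          refine Finset.sum_congr rfl fun j _ => Finset.sum_congr rfl fun u _ => (hmu j u).symm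
  -- multiplicity counts over `Fin n × U`
  let cnt : (Fin n → (C →ₗ[R] R)) → (C →ₗ[R] R) → ℕ := fun v g =>
    (Finset.univ.filter fun p : Fin n × U => sc (v p.1) p.2 = g).card
  have sum_count : ∀ v : Fin n → (C →ₗ[R] R),
      ∑ p : Fin n × U, ((ψ (sc (v p.1) p.2)) : C → ℂ)
        = ∑ g ∈ Finset.univ.image (fun p : Fin n × U => sc (v p.1) p.2),
            cnt v g • ((ψ g) : C → ℂ) :=
    fun v => Finset.sum_comp (fun g => ((ψ g) : C → ℂ)) (fun p : Fin n × U => sc (v p.1) p.2)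
  set S : Finset (C →ₗ[R] R) :=
    (Finset.univ.image fun p : Fin n × U => sc (lam p.1) p.2) ∪
      (Finset.univ.image fun p : Fin n × U => sc (mu p.1) p.2) with hS
  have cnt_zero : ∀ (v : Fin n → (C →ₗ[R] R)) (g : C →ₗ[R] R),
      g ∉ Finset.univ.image (fun p : Fin n × U => sc (v p.1) p.2) → cnt v g = 0 := by
    intro v g hg
    rw [show cnt v g = _ from rfl, Finset.card_eq_zero, Finset.filter_eq_empty_iff]
    exact fun p _ hp => hg (Finset.mem_image.mpr ⟨p, Finset.mem_univ p, hp⟩)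
  have extend : ∀ (v : Fin n → (C →ₗ[R] R)),
      Finset.univ.image (fun p : Fin n × U => sc (v p.1) p.2) ⊆ S →
      ∑ g ∈ Finset.univ.image (fun p : Fin n × U => sc (v p.1) p.2), cnt v g • ((ψ g) : C → ℂ)
        = ∑ g ∈ S, cnt v g • ((ψ g) : C → ℂ) :=
    fun v him => Finset.sum_subset him fun g _ hg => by rw [cnt_zero v g hg, zero_smul]
  have keyS : ∑ g ∈ S, cnt lam g • ((ψ g) : C → ℂ) = ∑ g ∈ S, cnt mu g • ((ψ g) : C → ℂ) := by
    rw [← extend lam Finset.subset_union_left, ← extend mu Finset.subset_union_right,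
      ← sum_count lam, ← sum_count mu]
    exact key
  have sum_eq : ∑ g ∈ S, (((cnt lam g : ℂ)) - ((cnt mu g : ℂ))) • ((ψ g) : C → ℂ) = 0 := by
    have : ∀ (m : ℕ) (w : C → ℂ), (m : ℂ) • w = m • w := fun m w => Nat.cast_smul_eq_nsmul ℂ m w
    calc ∑ g ∈ S, (((cnt lam g : ℂ)) - ((cnt mu g : ℂ))) • ((ψ g) : C → ℂ)
        = ∑ g ∈ S, (cnt lam g • ((ψ g) : C → ℂ) - cnt mu g • ((ψ g) : C → ℂ)) := by
          refine Finset.sum_congr rfl fun g _ => ?_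
          rw [sub_smul, this, this]
      _ = 0 := by rw [Finset.sum_sub_distrib, keyS, sub_self]
  have hcnt : ∀ g, cnt lam g = cnt mu g := by
    intro g
    by_cases hg : g ∈ S
    · have := linearIndependent_iff'.mp li S
        (fun g => ((cnt lam g : ℂ)) - ((cnt mu g : ℂ))) sum_eq g hg
      exact_mod_cast sub_eq_zero.mp this
    · rw [cnt_zero lam g (fun h => hg (Finset.mem_union_left _ h)),
        cnt_zero mu g (fun h => hg (Finset.mem_union_right _ h))]
  -- orbit counting
  let rel : (C →ₗ[R] R) → (C →ₗ[R] R) → Prop := fun g h => ∃ u : U, h = sc g u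
  have rel_refl : ∀ g, rel g g := fun g => ⟨1, (sc_one g).symm⟩
  have rel_symm : ∀ {g h}, rel g h → rel h g := by
    rintro g h ⟨u, rfl⟩
    exact ⟨u⁻¹, by rw [sc_mul]; simp [sc_one]⟩
  have rel_trans : ∀ {a b c}, rel a b → rel b c → rel a c := by
    rintro a b c ⟨u, rfl⟩ ⟨v, rfl⟩
    exact ⟨u * v, sc_mul a u v⟩
  have fiber_card : ∀ (v g : C →ₗ[R] R) (u0 : U), sc v u0 = g →
      (Finset.univ.filter fun u : U => sc v u = g).card
        = (Finset.univ.filter fun w : U => sc g w = g).card := by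
    intro v g u0 h0
    refine Finset.card_nbij' (fun u => u0⁻¹ * u) (fun w => u0 * w) ?_ ?_ ?_ ?_
    · intro u hu
      rw [Finset.mem_coe, Finset.mem_filter] at hu ⊢
      simp only []
      refine ⟨Finset.mem_univ _, ?_⟩
      have hstep : sc g (u0⁻¹ * u) = sc v u := by
        rw [← h0, sc_mul, ← mul_assoc]
        simp
      rw [hstep, hu.2]
    · intro w hw
      rw [Finset.mem_coe, Finset.mem_filter] at hw ⊢
      simp only []
      refine ⟨Finset.mem_univ _, ?_⟩
      rw [← sc_mul, h0, hw.2]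
    · intro u _; simp
    · intro w _; simp
  have cnt_eq : ∀ (v : Fin n → (C →ₗ[R] R)) (g : C →ₗ[R] R),
      cnt v g = ∑ i, (Finset.univ.filter fun u : U => sc (v i) u = g).card := by
    intro v g
    have hc : cnt v g = (Finset.univ.filter fun p : Fin n × U => sc (v p.1) p.2 = g).card := rfl
    rw [hc, Finset.card_filter, Fintype.sum_prod_type]
    exact Finset.sum_congr rfl fun i _ => (Finset.card_filter _ _).symm
  have cnt_orbit : ∀ (v : Fin n → (C →ₗ[R] R)) (g : C →ₗ[R] R),
      cnt v g = (Finset.univ.filter fun w : U => sc g w = g).card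
        * (Finset.univ.filter fun i : Fin n => rel (v i) g).card := by
    intro v g
    rw [cnt_eq]
    have hterm : ∀ i, (Finset.univ.filter fun u : U => sc (v i) u = g).card
        = if rel (v i) g then (Finset.univ.filter fun w : U => sc g w = g).card else 0 := by
      intro i
      by_cases h : rel (v i) g
      · obtain ⟨u0, hu0⟩ := h
        rw [if_pos ⟨u0, hu0⟩, fiber_card (v i) g u0 hu0.symm]
      · rw [if_neg h, Finset.card_eq_zero, Finset.filter_eq_empty_iff]
        exact fun u _ hu => h ⟨u, hu.symm⟩
    rw [Finset.sum_congr rfl fun i _ => hterm i, ← Finset.sum_filter, Finset.sum_const,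
      smul_eq_mul, mul_comm]
  have stab_pos : ∀ g : C →ₗ[R] R,
      0 < (Finset.univ.filter fun w : U => sc g w = g).card := by
    intro g
    refine Finset.card_pos.mpr ⟨1, ?_⟩
    rw [Finset.mem_filter]
    exact ⟨Finset.mem_univ _, sc_one g⟩
  have horb : ∀ g, (Finset.univ.filter fun i : Fin n => rel (lam i) g).card
      = (Finset.univ.filter fun i : Fin n => rel (mu i) g).card := by
    intro g
    have h := hcnt g
    rw [cnt_orbit lam g, cnt_orbit mu g] at h
    exact Nat.eq_of_mul_eq_mul_left (stab_pos g) h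
  -- extract a permutation
  let st : Setoid (C →ₗ[R] R) := ⟨rel, ⟨fun {g} => rel_refl g, rel_symm, rel_trans⟩⟩
  have hfilter : ∀ (v : Fin n → (C →ₗ[R] R)) (g : C →ₗ[R] R),
      (Finset.univ.filter fun i : Fin n => Quotient.mk st (v i) = Quotient.mk st g)
        = (Finset.univ.filter fun i : Fin n => rel (v i) g) := by
    intro v g
    refine Finset.filter_congr fun i _ => ?_
    exact Quotient.eq (r := st)
  have hfib : ∀ c : Quotient st,
      Fintype.card {i : Fin n // Quotient.mk st (lam i) = c}
        = Fintype.card {i : Fin n // Quotient.mk st (mu i) = c} := by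
    intro c
    induction c using Quotient.inductionOn with
    | h g =>
      rw [Fintype.card_subtype, Fintype.card_subtype, hfilter lam g, hfilter mu g]
      exact horb g
  let σ : Fin n ≃ Fin n := Equiv.ofFiberEquiv (f := fun i => Quotient.mk st (lam i))
    (g := fun j => Quotient.mk st (mu j)) (fun c => Fintype.equivOfCardEq (hfib c))
  have hσ : ∀ i, Quotient.mk st (mu (σ i)) = Quotient.mk st (lam i) := fun i =>
    Equiv.ofFiberEquiv_map (f := fun i => Quotient.mk st (lam i))
      (g := fun j => Quotient.mk st (mu j)) (fun c => Fintype.equivOfCardEq (hfib c)) i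
  have hrel : ∀ i, rel (lam i) (mu (σ i)) := fun i => rel_symm (Quotient.exact (hσ i))
  choose u hu using hrel
  refine ⟨Matrix.of fun i j => if j = σ i then ((u i : Rˣ) : R) else 0,
    ⟨σ, fun i => (u i : Rˣ), fun i => (u i).2, fun i j => rfl⟩, ?_⟩
  intro x
  funext j
  have hv := vecMul_monomial (Matrix.of fun i j => if j = σ i then ((u i : Rˣ) : R) else 0) σ
    (fun i => ((u i : Rˣ) : R)) (fun i j => rfl) (x : Fin n → R) j
  have h := congrArg (fun g : C →ₗ[R] R => g x) (hu (σ.symm j))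
  simp only [Equiv.apply_symm_apply] at h
  exact h.trans hv.symm
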